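/- (Factorization of bounded measures by Carleson measures — nontangential bound.) Let μ be a nonnegative bounded Borel measure on the closed upper half space with 𝒜̄(μ)(x) ∈ (0,∞) for a.e. x, and fix 0 < p₀ < 1. Define E(μ)(y,t) = |B(y,t)|⁻¹∫_{B(y,t)} 𝒜̄(μ)⁻¹ dx. Then for every x ∈ ℝⁿ, 𝒩(E(μ)⁻¹)(x) ≤ M(𝒜̄(μ)^{p₀})(x)^{1/p₀}, where 𝒩 is the nontangential maximal functional and M is the Hardy–Littlewood maximal operator. Consequently ‖E(μ)⁻¹‖_{T¹_∞} = ‖𝒩(E(μ)⁻¹)‖_{L¹} ≤ C(n,p₀)‖𝒜̄(μ)‖_{L¹}. -/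

import Mathlib

open MeasureTheory Metric Set

/-- The balayage 𝒜̄(μ)(x) = ∫∫_{Γ(x)} s^{-n} dμ(z,s). -/
noncomputable def balayage (n : ℕ) (μ : Measure (EuclideanSpace ℝ (Fin n) × ℝ))
    (x : EuclideanSpace ℝ (Fin n)) : ENNReal :=
  ∫⁻ p in {p : EuclideanSpace ℝ (Fin n) × ℝ | dist p.1 x < p.2},
    (ENNReal.ofReal (p.2 ^ n))⁻¹ ∂μ

/-- The extension E(μ)(y,t) = |B(y,t)|⁻¹ ∫_{B(y,t)} 𝒜̄(μ)⁻¹ dx. -/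
noncomputable def balExt (n : ℕ) (μ : Measure (EuclideanSpace ℝ (Fin n) × ℝ))
    (y : EuclideanSpace ℝ (Fin n)) (t : ℝ) : ENNReal :=
  (volume (ball y t))⁻¹ * ∫⁻ x in ball y t, (balayage n μ x)⁻¹

/-- The (uncentered) Hardy–Littlewood maximal function of g at x. -/
noncomputable def hlMax (n : ℕ) (g : EuclideanSpace ℝ (Fin n) → ENNReal)
    (x : EuclideanSpace ℝ (Fin n)) : ENNReal :=
  ⨆ (c : EuclideanSpace ℝ (Fin n)) (r : ℝ) (_ : 0 < r) (_ : x ∈ ball c r),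
    (volume (ball c r))⁻¹ * ∫⁻ z in ball c r, g z

open scoped ENNReal

lemma measurable_hlMax (n : ℕ) (g : EuclideanSpace ℝ (Fin n) → ENNReal) :
    Measurable (hlMax n g) := by
  apply measurable_of_Ioi
  intro a
  have h : hlMax n g ⁻¹' Ioi a =
      ⋃ (c) (r) (_ : 0 < r ∧ a < (volume (ball c r))⁻¹ * ∫⁻ z in ball c r, g z), ball c r := by
    ext x
    simp only [mem_preimage, mem_Ioi, hlMax, lt_iSup_iff, mem_iUnion]
    constructor
    · rintro ⟨c, r, hr, hx, hlt⟩; exact ⟨c, r, ⟨hr, hlt⟩, hx⟩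
    · rintro ⟨c, r, ⟨hr, hlt⟩, hx⟩; exact ⟨c, r, hr, hx, hlt⟩
  rw [h]
  exact (isOpen_iUnion fun c => isOpen_iUnion fun r => isOpen_iUnion fun _ =>
    isOpen_ball).measurableSet

lemma le_hlMax (n : ℕ) (g : EuclideanSpace ℝ (Fin n) → ENNReal)
    {x c : EuclideanSpace ℝ (Fin n)} {r : ℝ} (hr : 0 < r) (hx : x ∈ ball c r) :
    (volume (ball c r))⁻¹ * ∫⁻ z in ball c r, g z ≤ hlMax n g x :=
  le_iSup_of_le c (le_iSup_of_le r (le_iSup_of_le hr (le_iSup_of_le hx le_rfl)))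

lemma hlMax_le (n : ℕ) (g : EuclideanSpace ℝ (Fin n) → ENNReal)
    {x : EuclideanSpace ℝ (Fin n)} {A : ENNReal}
    (h : ∀ c r, 0 < r → x ∈ ball c r →
      (volume (ball c r))⁻¹ * ∫⁻ z in ball c r, g z ≤ A) :
    hlMax n g x ≤ A :=
  iSup_le fun c => iSup_le fun r => iSup_le fun hr => iSup_le fun hx => h c r hr hx

lemma ball_vol_pos (n : ℕ) (c : EuclideanSpace ℝ (Fin n)) {r : ℝ} (hr : 0 < r) :
    0 < volume (ball c r) := measure_ball_pos _ _ hr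

lemma ball_vol_lt_top (n : ℕ) (c : EuclideanSpace ℝ (Fin n)) (r : ℝ) :
    volume (ball c r) < ⊤ := measure_ball_lt_top

/-- truncation -/
lemma hlMax_trunc (n : ℕ) (g : EuclideanSpace ℝ (Fin n) → ENNReal) (δ : ENNReal)
    (x : EuclideanSpace ℝ (Fin n)) :
    hlMax n g x ≤ hlMax n (fun y => if δ < g y then g y else 0) x + δ := by
  apply hlMax_le
  intro c r hr hx
  have hV0 : volume (ball c r) ≠ 0 := (ball_vol_pos n c hr).ne'
  have hVt : volume (ball c r) ≠ ⊤ := (ball_vol_lt_top n c r).ne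
  have hg : ∀ y, g y ≤ (if δ < g y then g y else 0) + δ := by
    intro y
    by_cases h : δ < g y
    · simp [h, le_add_right]
    · simp only [h, if_neg, ite_false, zero_add]
      exact le_of_not_gt h
  calc (volume (ball c r))⁻¹ * ∫⁻ z in ball c r, g z
      ≤ (volume (ball c r))⁻¹ * ∫⁻ z in ball c r, ((if δ < g z then g z else 0) + δ) :=
        mul_le_mul_right (lintegral_mono hg) _
    _ = (volume (ball c r))⁻¹ * ((∫⁻ z in ball c r, (if δ < g z then g z else 0)) + δ * volume (ball c r)) := by
        rw [lintegral_add_right _ measurable_const, setLIntegral_const]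
    _ = (volume (ball c r))⁻¹ * (∫⁻ z in ball c r, (if δ < g z then g z else 0)) + δ := by
        rw [mul_add]
        congr 1
        rw [mul_comm δ, ← mul_assoc, ENNReal.inv_mul_cancel hV0 hVt, one_mul]
    _ ≤ hlMax n (fun y => if δ < g y then g y else 0) x + δ :=
        add_le_add_left (le_hlMax n _ hr hx) δ

open scoped ENNReal

lemma weak_type (n : ℕ) (g : EuclideanSpace ℝ (Fin n) → ENNReal) {ε : ℝ≥0∞}
    (hε0 : ε ≠ 0) (hεtop : ε ≠ ⊤) :
    volume {x | ε < hlMax n g x} ≤ 5 ^ n * ε⁻¹ * ∫⁻ x, g x := by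
  set I := ∫⁻ x, g x with hIdef
  by_cases hI : I = ⊤
  · rw [hI, ENNReal.mul_top (by
      refine mul_ne_zero (by positivity) (ENNReal.inv_ne_zero.2 hεtop))]
    exact le_top
  set U := {x | ε < hlMax n g x} with hUdef
  have key : ∀ x ∈ U, ∃ (c' : EuclideanSpace ℝ (Fin n)) (r' : ℝ), 0 < r' ∧ x ∈ ball c' r' ∧
      volume (ball c' r') ≤ ε⁻¹ * ∫⁻ z in ball c' r', g z ∧
      (∫⁻ z in ball c' r', g z) ≤ I := by
    intro x hx
    have hx' : ε < hlMax n g x := hx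
    rw [hlMax] at hx'
    simp only [lt_iSup_iff] at hx'
    obtain ⟨c', r', hr', hxb, hlt⟩ := hx'
    have hV0 : volume (ball c' r') ≠ 0 := (measure_ball_pos _ _ hr').ne'
    have hVt : volume (ball c' r') ≠ ⊤ := measure_ball_lt_top.ne
    refine ⟨c', r', hr', hxb, ?_, setLIntegral_le_lintegral _ _⟩
    have h1 : ε * volume (ball c' r') ≤ ∫⁻ z in ball c' r', g z := by
      calc ε * volume (ball c' r')
          ≤ ((volume (ball c' r'))⁻¹ * ∫⁻ z in ball c' r', g z) * volume (ball c' r') :=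
            mul_le_mul_left hlt.le _
        _ = ∫⁻ z in ball c' r', g z := by
            rw [mul_comm _ (∫⁻ z in ball c' r', g z), mul_assoc,
              ENNReal.inv_mul_cancel hV0 hVt, mul_one]
    calc volume (ball c' r') = ε⁻¹ * (ε * volume (ball c' r')) := by
          rw [← mul_assoc, ENNReal.inv_mul_cancel hε0 hεtop, one_mul]
      _ ≤ ε⁻¹ * ∫⁻ z in ball c' r', g z := mul_le_mul_right h1 _
  choose! c r hr hxb hVle hSle using key
  rcases Nat.eq_zero_or_pos n with hn | hn
  · subst hn
    rcases eq_empty_or_nonempty U with hUe | ⟨x, hx⟩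
    · rw [hUe]; simp
    have hballuniv : ball (c x) (r x) = univ := by
      apply eq_univ_iff_forall.2
      intro y
      have : y = c x := Subsingleton.elim _ _
      simp [mem_ball, this, hr x hx]
    calc volume U ≤ volume (ball (c x) (r x)) := by
          rw [hballuniv]; exact measure_mono (subset_univ U)
      _ ≤ ε⁻¹ * ∫⁻ z in ball (c x) (r x), g z := hVle x hx
      _ ≤ ε⁻¹ * I := mul_le_mul_right (hSle x hx) _
      _ = 5 ^ 0 * ε⁻¹ * I := by norm_num
  -- main case n ≥ 1
  haveI : Nonempty (Fin n) := ⟨⟨0, hn⟩⟩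
  haveI : Nontrivial (EuclideanSpace ℝ (Fin n)) := inferInstance
  set B := volume (ball (0 : EuclideanSpace ℝ (Fin n)) 1) with hBdef
  have hB0 : B ≠ 0 := (measure_ball_pos _ _ one_pos).ne'
  have hBt : B ≠ ⊤ := measure_ball_lt_top.ne
  set K : ℝ≥0∞ := ε⁻¹ * I with hKdef
  have hKt : K ≠ ⊤ := ENNReal.mul_ne_top (ENNReal.inv_ne_top.2 hε0) hI
  have hvol : ∀ (x : EuclideanSpace ℝ (Fin n)) (r' : ℝ), 0 ≤ r' → volume (ball x r') = ENNReal.ofReal (r' ^ n) * B := by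
    intro x r' hr'
    rw [Measure.addHaar_ball volume x hr', finrank_euclideanSpace_fin]
  set R : ℝ := max 1 (K * B⁻¹).toReal with hRdef
  have hrR : ∀ x ∈ U, r x ≤ R := by
    intro x hx
    by_contra hcon
    push_neg at hcon
    have h1R : (1:ℝ) < r x := lt_of_le_of_lt (le_max_left _ _) hcon
    have h2R : (K * B⁻¹).toReal < r x := lt_of_le_of_lt (le_max_right _ _) hcon
    have hVK : volume (ball (c x) (r x)) ≤ K :=
      le_trans (hVle x hx) (mul_le_mul_right (hSle x hx) _)
    have hofReal : ENNReal.ofReal (r x ^ n) ≤ K * B⁻¹ := by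
      have h3 : ENNReal.ofReal (r x ^ n) * B ≤ K := by rw [← hvol _ _ (by positivity)]; exact hVK
      calc ENNReal.ofReal (r x ^ n) = ENNReal.ofReal (r x ^ n) * B * B⁻¹ := by
            rw [mul_assoc, ENNReal.mul_inv_cancel hB0 hBt, mul_one]
        _ ≤ K * B⁻¹ := mul_le_mul_left h3 _
    have hKBt : K * B⁻¹ ≠ ⊤ := ENNReal.mul_ne_top hKt (ENNReal.inv_ne_top.2 hB0)
    have := (ENNReal.ofReal_le_iff_le_toReal hKBt).1 hofReal
    have hx1 : r x ≤ r x ^ n := le_self_pow₀ h1R.le hn.ne'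
    linarith
  obtain ⟨u, huU, hdisj, hcover⟩ :=
    Vitali.exists_disjoint_subfamily_covering_enlargement_closedBall U c r R hrR 5 (by norm_num)
  have hucount : u.Countable := by
    apply hdisj.countable_of_nonempty_interior
    intro b hb
    exact ⟨c b, ball_subset_interior_closedBall (mem_ball_self (hr b (huU hb)))⟩
  have hUsub : U ⊆ ⋃ b ∈ u, closedBall (c b) (5 * r b) := by
    intro x hx
    obtain ⟨b, hbu, hsub⟩ := hcover x hx
    exact mem_iUnion₂.2 ⟨b, hbu, hsub (ball_subset_closedBall (hxb x hx))⟩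
  have hcbvol : ∀ b ∈ u, volume (closedBall (c b) (5 * r b)) ≤
      5 ^ n * (ε⁻¹ * ∫⁻ z in ball (c b) (r b), g z) := by
    intro b hb
    have hrb : 0 < r b := hr b (huU hb)
    have h5 : volume (closedBall (c b) (5 * r b)) = 5 ^ n * volume (ball (c b) (r b)) := by
      rw [Measure.addHaar_closedBall volume _ (by positivity), finrank_euclideanSpace_fin,
        hvol _ _ hrb.le, mul_pow, ENNReal.ofReal_mul (by positivity),
        ENNReal.ofReal_pow (by norm_num : (0:ℝ) ≤ 5), ← mul_assoc]
      norm_num [hBdef]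
    rw [h5]
    exact mul_le_mul_right (hVle b (huU hb)) _
  haveI := hucount.to_subtype
  have hsum : ∑' (b : u), ∫⁻ z in ball (c b) (r b), g z ≤ I := by
    have hdisj' : Pairwise (Function.onFun Disjoint fun b : u => ball (c (b:_)) (r (b:_))) := by
      intro b b' hne
      exact ((hdisj b.2 b'.2 (Subtype.coe_injective.ne hne)).mono
        ball_subset_closedBall ball_subset_closedBall)
    calc ∑' (b : u), ∫⁻ z in ball (c b) (r b), g z
        = ∫⁻ a, g a ∂(Measure.sum fun b : u => volume.restrict (ball (c (b:_)) (r (b:_)))) :=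
          (lintegral_sum_measure _ _).symm
      _ = ∫⁻ a, g a ∂(volume.restrict (⋃ b : u, ball (c (b:_)) (r (b:_)))) := by
          rw [Measure.restrict_iUnion hdisj' (fun _ => measurableSet_ball)]
      _ ≤ I := lintegral_mono' Measure.restrict_le_self le_rfl
  calc volume U ≤ volume (⋃ b ∈ u, closedBall (c b) (5 * r b)) := measure_mono hUsub
    _ ≤ ∑' (b : u), volume (closedBall (c b) (5 * r b)) := measure_biUnion_le _ hucount _
    _ ≤ ∑' (b : u), 5 ^ n * (ε⁻¹ * ∫⁻ z in ball (c b) (r b), g z) :=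
        ENNReal.tsum_le_tsum (fun b => hcbvol b b.2)
    _ = 5 ^ n * ε⁻¹ * ∑' (b : u), ∫⁻ z in ball (c b) (r b), g z := by
        rw [← ENNReal.tsum_mul_left]
        congr 1; funext b; rw [← mul_assoc]
    _ ≤ 5 ^ n * ε⁻¹ * I := mul_le_mul_right hsum _

lemma two_rpow_pos (y : ℝ) : 0 < (2:ℝ≥0∞) ^ y :=
  ENNReal.rpow_pos (by norm_num) (by norm_num)

lemma two_rpow_ne_top (y : ℝ) : (2:ℝ≥0∞) ^ y ≠ ⊤ := by
  rcases le_or_gt 0 y with hy | hy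
  · exact ENNReal.rpow_ne_top_of_nonneg hy (by norm_num)
  · rw [← neg_neg y, ENNReal.rpow_neg]
    exact ENNReal.inv_ne_top.2 (two_rpow_pos (-y)).ne'

lemma two_rpow_add (y z : ℝ) : (2:ℝ≥0∞) ^ (y + z) = 2 ^ y * 2 ^ z :=
  ENNReal.rpow_add y z (by norm_num) (by norm_num)

/-- geometric tail bound -/
lemma helper_geom {s : ℝ} (hs : 0 < s) (a : ℝ≥0∞) :
    ∑' k : ℤ, (if (2:ℝ≥0∞) ^ (k:ℝ) < a then (2:ℝ≥0∞) ^ ((k:ℝ)*s) else 0)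
      ≤ (1 - 2⁻¹ ^ s)⁻¹ * a ^ s := by
  rcases eq_or_ne a 0 with rfl | ha0
  · simp
  rcases eq_or_ne a ⊤ with rfl | hat
  · rw [ENNReal.top_rpow_of_pos hs, ENNReal.mul_top]
    · exact le_top
    · refine ENNReal.inv_ne_zero.2 ?_
      exact ne_top_of_le_ne_top (by norm_num) tsub_le_self
  -- bounded above
  have hbdd : ∃ m : ℤ, ∀ k : ℤ, (2:ℝ≥0∞) ^ (k:ℝ) < a → k ≤ m := by
    obtain ⟨m, hm⟩ := ENNReal.exists_nat_gt hat
    refine ⟨m, fun k hk => ?_⟩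
    by_contra hcon
    push_neg at hcon
    have h1 : a < 2 ^ ((m:ℤ):ℝ) := by
      calc a < (m:ℝ≥0∞) := hm
        _ ≤ 2 ^ (m:ℕ) := by
            calc (m:ℝ≥0∞) ≤ ((2^m : ℕ):ℝ≥0∞) := by exact_mod_cast (Nat.lt_two_pow_self (n := m)).le
              _ = 2 ^ (m:ℕ) := by push_cast; ring
        _ = 2 ^ ((m:ℤ):ℝ) := by
            rw [show ((m:ℤ):ℝ) = ((m:ℕ):ℝ) by push_cast; ring, ENNReal.rpow_natCast]
    have h2 : (2:ℝ≥0∞) ^ ((m:ℤ):ℝ) ≤ 2 ^ (k:ℝ) :=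
      ENNReal.rpow_le_rpow_of_exponent_le (by norm_num) (by exact_mod_cast hcon.le)
    exact absurd (lt_trans h1 (lt_of_le_of_lt h2 hk)) (lt_irrefl _)
  have hne : ∃ k : ℤ, (2:ℝ≥0∞) ^ (k:ℝ) < a := by
    obtain ⟨j, hj⟩ := ENNReal.exists_nat_gt (ENNReal.inv_ne_top.2 ha0)
    have hj2 : a⁻¹ < 2 ^ (j:ℕ) := by
      calc a⁻¹ < (j:ℝ≥0∞) := hj
        _ ≤ 2 ^ (j:ℕ) := by
            calc (j:ℝ≥0∞) ≤ ((2^j : ℕ):ℝ≥0∞) := by exact_mod_cast (Nat.lt_two_pow_self (n := j)).le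
              _ = 2 ^ (j:ℕ) := by push_cast; ring
    refine ⟨-(j:ℤ), ?_⟩
    have : ((-(j:ℤ):ℤ):ℝ) = -(j:ℝ) := by push_cast; ring
    rw [this, ENNReal.rpow_neg, ← ENNReal.inv_lt_iff_inv_lt, ENNReal.rpow_natCast]
    exact hj2
  obtain ⟨k₀, hk₀mem, hk₀max⟩ := Int.exists_greatest_of_bdd hbdd hne
  calc ∑' k : ℤ, (if (2:ℝ≥0∞) ^ (k:ℝ) < a then (2:ℝ≥0∞) ^ ((k:ℝ)*s) else 0)
      ≤ ∑' k : ℤ, (if k ≤ k₀ then (2:ℝ≥0∞) ^ ((k:ℝ)*s) else 0) := by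
        refine ENNReal.tsum_le_tsum fun k => ?_
        by_cases hk : (2:ℝ≥0∞) ^ (k:ℝ) < a
        · rw [if_pos hk, if_pos (hk₀max k hk)]
        · rw [if_neg hk]; exact zero_le
    _ = ∑' j : ℕ, (if (k₀ - (j:ℤ)) ≤ k₀ then (2:ℝ≥0∞) ^ (((k₀ - (j:ℤ) : ℤ):ℝ)*s) else 0) := by
        refine (Function.Injective.tsum_eq (g := fun j : ℕ => k₀ - (j:ℤ)) ?_ ?_).symm
        · intro j j' h; simp only at h; omega
        · intro k hk
          have hkle : k ≤ k₀ := by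
            by_contra hc
            simp [if_neg hc] at hk
          exact ⟨(k₀ - k).toNat, by simp only []; omega⟩
    _ = ∑' j : ℕ, (2:ℝ≥0∞) ^ ((k₀:ℝ)*s) * (2⁻¹ ^ s) ^ (j:ℕ) := by
        congr 1; funext j
        rw [if_pos (by omega)]
        have he : (((k₀ - (j:ℤ) : ℤ):ℝ)) * s = (k₀:ℝ)*s + (-s) * (j:ℕ) := by push_cast; ring
        rw [he, two_rpow_add]
        congr 1
        rw [ENNReal.inv_rpow, ← ENNReal.rpow_neg, ← ENNReal.rpow_natCast ((2:ℝ≥0∞) ^ (-s)) j,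
          ← ENNReal.rpow_mul]
    _ = (2:ℝ≥0∞) ^ ((k₀:ℝ)*s) * (1 - 2⁻¹ ^ s)⁻¹ := by
        rw [ENNReal.tsum_mul_left, ENNReal.tsum_geometric]
    _ ≤ a ^ s * (1 - 2⁻¹ ^ s)⁻¹ := by
        refine mul_le_mul_left ?_ _
        rw [ENNReal.rpow_mul]
        exact ENNReal.rpow_le_rpow (by exact_mod_cast hk₀mem.le) hs.le
    _ = (1 - 2⁻¹ ^ s)⁻¹ * a ^ s := mul_comm _ _

/-- pointwise layercake -/
lemma pointwise_layer {q : ℝ} (hq : 0 < q) (a : ℝ≥0∞) :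
    a ^ q ≤ (2:ℝ≥0∞) ^ q * ∑' k : ℤ, (if (2:ℝ≥0∞) ^ (k:ℝ) < a then (2:ℝ≥0∞) ^ ((k:ℝ)*q) else 0) := by
  rcases eq_or_ne a 0 with rfl | ha0
  · rw [ENNReal.zero_rpow_of_pos hq]; exact zero_le
  rcases eq_or_ne a ⊤ with rfl | hat
  · have htop : ∑' k : ℤ, (if (2:ℝ≥0∞) ^ (k:ℝ) < (⊤:ℝ≥0∞) then (2:ℝ≥0∞) ^ ((k:ℝ)*q) else 0) = ⊤ := by
      refine top_le_iff.1 ?_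
      have h1 : ∀ k : ℤ, (if (2:ℝ≥0∞) ^ (k:ℝ) < (⊤:ℝ≥0∞) then (2:ℝ≥0∞) ^ ((k:ℝ)*q) else 0)
          = (2:ℝ≥0∞) ^ ((k:ℝ)*q) := fun k => if_pos (lt_of_le_of_ne le_top (two_rpow_ne_top _))
      calc (⊤:ℝ≥0∞) = ∑' (_ : ℕ), (1:ℝ≥0∞) := (ENNReal.tsum_const_eq_top_of_ne_zero one_ne_zero).symm
        _ ≤ ∑' j : ℕ, (2:ℝ≥0∞) ^ (((j:ℤ):ℝ)*q) := by
            refine ENNReal.tsum_le_tsum fun j => ?_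
            calc (1:ℝ≥0∞) = 2 ^ (0:ℝ) := ENNReal.rpow_zero.symm
              _ ≤ 2 ^ (((j:ℤ):ℝ)*q) := ENNReal.rpow_le_rpow_of_exponent_le (by norm_num)
                  (by positivity)
        _ = ∑' j : ℕ, (if (2:ℝ≥0∞) ^ (((j:ℤ):ℝ)) < (⊤:ℝ≥0∞) then (2:ℝ≥0∞) ^ (((j:ℤ):ℝ)*q) else 0) := by
            congr 1; funext j; rw [h1]
        _ ≤ ∑' k : ℤ, (if (2:ℝ≥0∞) ^ (k:ℝ) < (⊤:ℝ≥0∞) then (2:ℝ≥0∞) ^ ((k:ℝ)*q) else 0) :=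
            ENNReal.tsum_comp_le_tsum_of_injective
              (f := fun j : ℕ => (j : ℤ)) (fun a b h => by simpa using h) _
    rw [htop, ENNReal.mul_top (two_rpow_pos q).ne']
    exact le_top
  -- finite positive case
  have hbdd : ∃ m : ℤ, ∀ k : ℤ, (2:ℝ≥0∞) ^ (k:ℝ) < a → k ≤ m := by
    obtain ⟨m, hm⟩ := ENNReal.exists_nat_gt hat
    refine ⟨m, fun k hk => ?_⟩
    by_contra hcon
    push_neg at hcon
    have h1 : a < 2 ^ ((m:ℤ):ℝ) := by
      calc a < (m:ℝ≥0∞) := hm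
        _ ≤ 2 ^ (m:ℕ) := by
            calc (m:ℝ≥0∞) ≤ ((2^m : ℕ):ℝ≥0∞) := by exact_mod_cast (Nat.lt_two_pow_self (n := m)).le
              _ = 2 ^ (m:ℕ) := by push_cast; ring
        _ = 2 ^ ((m:ℤ):ℝ) := by
            rw [show ((m:ℤ):ℝ) = ((m:ℕ):ℝ) by push_cast; ring, ENNReal.rpow_natCast]
    have h2 : (2:ℝ≥0∞) ^ ((m:ℤ):ℝ) ≤ 2 ^ (k:ℝ) :=
      ENNReal.rpow_le_rpow_of_exponent_le (by norm_num) (by exact_mod_cast hcon.le)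
    exact absurd (lt_trans h1 (lt_of_le_of_lt h2 hk)) (lt_irrefl _)
  have hne : ∃ k : ℤ, (2:ℝ≥0∞) ^ (k:ℝ) < a := by
    obtain ⟨j, hj⟩ := ENNReal.exists_nat_gt (ENNReal.inv_ne_top.2 ha0)
    have hj2 : a⁻¹ < 2 ^ (j:ℕ) := by
      calc a⁻¹ < (j:ℝ≥0∞) := hj
        _ ≤ 2 ^ (j:ℕ) := by
            calc (j:ℝ≥0∞) ≤ ((2^j : ℕ):ℝ≥0∞) := by exact_mod_cast (Nat.lt_two_pow_self (n := j)).le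
              _ = 2 ^ (j:ℕ) := by push_cast; ring
    refine ⟨-(j:ℤ), ?_⟩
    have he : ((-(j:ℤ):ℤ):ℝ) = -(j:ℝ) := by push_cast; ring
    rw [he, ENNReal.rpow_neg, ← ENNReal.inv_lt_iff_inv_lt, ENNReal.rpow_natCast]
    exact hj2
  obtain ⟨k₀, hk₀mem, hk₀max⟩ := Int.exists_greatest_of_bdd hbdd hne
  have hterm : (if (2:ℝ≥0∞) ^ ((k₀:ℤ):ℝ) < a then (2:ℝ≥0∞) ^ (((k₀:ℤ):ℝ)*q) else 0)
      ≤ ∑' k : ℤ, (if (2:ℝ≥0∞) ^ (k:ℝ) < a then (2:ℝ≥0∞) ^ ((k:ℝ)*q) else 0) :=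
    ENNReal.le_tsum k₀
  rw [if_pos hk₀mem] at hterm
  have ha_le : a ≤ 2 ^ (((k₀+1:ℤ)):ℝ) := by
    by_contra hcon
    push_neg at hcon
    exact absurd (hk₀max _ hcon) (by omega)
  calc a ^ q ≤ (2 ^ (((k₀+1:ℤ)):ℝ)) ^ q := ENNReal.rpow_le_rpow ha_le hq.le
    _ = 2 ^ q * 2 ^ ((k₀:ℝ)*q) := by
        rw [← ENNReal.rpow_mul]
        rw [show (((k₀+1:ℤ)):ℝ) * q = q + (k₀:ℝ)*q by push_cast; ring, two_rpow_add]
    _ ≤ 2 ^ q * ∑' k : ℤ, (if (2:ℝ≥0∞) ^ (k:ℝ) < a then (2:ℝ≥0∞) ^ ((k:ℝ)*q) else 0) := by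
        refine mul_le_mul_right ?_ _
        exact_mod_cast hterm


lemma self_mul_rpow {q : ℝ} (hq : 1 < q) (a : ℝ≥0∞) : a * a ^ (q-1) = a ^ q := by
  rcases eq_or_ne a 0 with rfl | ha0
  · rw [ENNReal.zero_rpow_of_pos (by linarith), ENNReal.zero_rpow_of_pos (by linarith), mul_zero]
  rcases eq_or_ne a ⊤ with rfl | hat
  · rw [ENNReal.top_rpow_of_pos (by linarith), ENNReal.top_rpow_of_pos (by linarith), ENNReal.top_mul_top]
  · nth_rewrite 1 [← ENNReal.rpow_one a]
    rw [← ENNReal.rpow_add 1 (q-1) ha0 hat]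
    norm_num

lemma strong_type (n : ℕ) {q : ℝ} (hq : 1 < q) :
    ∃ C : ℝ≥0∞, 0 < C ∧ C ≠ ⊤ ∧ ∀ g : EuclideanSpace ℝ (Fin n) → ENNReal, Measurable g →
      ∫⁻ x, hlMax n g x ^ q ≤ C * ∫⁻ x, g x ^ q := by
  have hq1 : (0:ℝ) < q - 1 := by linarith
  set Cg : ℝ≥0∞ := (1 - 2⁻¹ ^ (q-1))⁻¹ with hCgdef
  have hr1 : (2:ℝ≥0∞)⁻¹ ^ (q-1) < 1 :=
    ENNReal.rpow_lt_one (by norm_num) hq1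
  have hCg0 : Cg ≠ 0 := ENNReal.inv_ne_zero.2 (ne_top_of_le_ne_top (by norm_num) tsub_le_self)
  have hCgt : Cg ≠ ⊤ := ENNReal.inv_ne_top.2 (tsub_pos_iff_lt.2 hr1).ne'
  refine ⟨2 ^ q * 5 ^ n * (2 * 2 ^ (q-1) * Cg), ?_, ?_, ?_⟩
  · exact ENNReal.mul_pos (mul_ne_zero (two_rpow_pos q).ne' (by positivity))
      (mul_ne_zero (mul_ne_zero two_ne_zero (two_rpow_pos (q-1)).ne') hCg0)
  · exact ENNReal.mul_ne_top (ENNReal.mul_ne_top (two_rpow_ne_top q) (ENNReal.pow_ne_top (by norm_num)))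
      (ENNReal.mul_ne_top (ENNReal.mul_ne_top (by norm_num) (two_rpow_ne_top (q-1))) hCgt)
  intro g hg
  set F := hlMax n g with hFdef
  have hF : Measurable F := measurable_hlMax n g
  set T : ℤ → EuclideanSpace ℝ (Fin n) → ℝ≥0∞ :=
    fun k y => if (2:ℝ≥0∞) ^ ((k:ℝ) - 1) < g y then g y else 0 with hTdef
  have hTmeas : ∀ k, Measurable (T k) := fun k =>
    Measurable.ite (measurableSet_lt measurable_const hg) hg measurable_const
  have step1 : ∫⁻ x, F x ^ q ≤
      2 ^ q * ∑' k : ℤ, ∫⁻ x, (if (2:ℝ≥0∞) ^ (k:ℝ) < F x then (2:ℝ≥0∞) ^ ((k:ℝ)*q) else 0) := by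
    have hmeas : ∀ k : ℤ, Measurable fun x =>
        (if (2:ℝ≥0∞) ^ (k:ℝ) < F x then (2:ℝ≥0∞) ^ ((k:ℝ)*q) else 0) := fun k =>
      Measurable.ite (measurableSet_lt measurable_const hF) measurable_const measurable_const
    calc ∫⁻ x, F x ^ q
        ≤ ∫⁻ x, 2 ^ q * ∑' k : ℤ, (if (2:ℝ≥0∞) ^ (k:ℝ) < F x then (2:ℝ≥0∞) ^ ((k:ℝ)*q) else 0) :=
          lintegral_mono fun x => pointwise_layer (by linarith) (F x)
      _ = 2 ^ q * ∫⁻ x, ∑' k : ℤ, (if (2:ℝ≥0∞) ^ (k:ℝ) < F x then (2:ℝ≥0∞) ^ ((k:ℝ)*q) else 0) :=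
          lintegral_const_mul _ (Measurable.ennreal_tsum hmeas)
      _ = 2 ^ q * ∑' k : ℤ, ∫⁻ x, (if (2:ℝ≥0∞) ^ (k:ℝ) < F x then (2:ℝ≥0∞) ^ ((k:ℝ)*q) else 0) := by
          rw [lintegral_tsum fun k => (hmeas k).aemeasurable]
  have step2 : ∀ k : ℤ, (∫⁻ x, (if (2:ℝ≥0∞) ^ (k:ℝ) < F x then (2:ℝ≥0∞) ^ ((k:ℝ)*q) else 0))
      ≤ (2:ℝ≥0∞) ^ ((k:ℝ)*q) * (5 ^ n * (2 ^ ((k:ℝ) - 1))⁻¹ * ∫⁻ x, T k x) := by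
    intro k
    have hind : (fun x => (if (2:ℝ≥0∞) ^ (k:ℝ) < F x then (2:ℝ≥0∞) ^ ((k:ℝ)*q) else 0))
        = ({x | (2:ℝ≥0∞) ^ (k:ℝ) < F x}).indicator (fun _ => (2:ℝ≥0∞) ^ ((k:ℝ)*q)) := by
      funext x; simp [Set.indicator_apply, mem_setOf_eq]
    rw [hind, lintegral_indicator_const (measurableSet_lt measurable_const hF)]
    refine mul_le_mul_right ?_ _
    have hsub : {x | (2:ℝ≥0∞) ^ (k:ℝ) < F x} ⊆ {x | (2:ℝ≥0∞) ^ ((k:ℝ)-1) < hlMax n (T k) x} := by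
      intro x hx
      have h1 : F x ≤ hlMax n (T k) x + 2 ^ ((k:ℝ)-1) := hlMax_trunc n g _ x
      have h2 : (2:ℝ≥0∞) ^ ((k:ℝ)-1) + 2 ^ ((k:ℝ)-1) < hlMax n (T k) x + 2 ^ ((k:ℝ)-1) := by
        refine lt_of_le_of_lt ?_ (lt_of_lt_of_le hx h1)
        rw [← two_mul, show (2:ℝ≥0∞) * 2 ^ ((k:ℝ)-1) = 2 ^ (1 + ((k:ℝ)-1)) by
          rw [two_rpow_add, ENNReal.rpow_one]]
        rw [show (1 + ((k:ℝ)-1)) = (k:ℝ) by ring]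
      exact (ENNReal.add_lt_add_iff_right (two_rpow_ne_top _)).1 h2
    calc volume {x | (2:ℝ≥0∞) ^ (k:ℝ) < F x}
        ≤ volume {x | (2:ℝ≥0∞) ^ ((k:ℝ)-1) < hlMax n (T k) x} := measure_mono hsub
      _ ≤ 5 ^ n * (2 ^ ((k:ℝ) - 1))⁻¹ * ∫⁻ x, T k x :=
          weak_type n (T k) (two_rpow_pos _).ne' (two_rpow_ne_top _)
  have hptwise : ∀ x, (∑' k : ℤ, (2:ℝ≥0∞) ^ ((k:ℝ)*(q-1) + 1) * T k x)
      ≤ 2 * 2 ^ (q-1) * Cg * g x ^ q := by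
    intro x
    have h1 : ∀ k : ℤ, (2:ℝ≥0∞) ^ ((k:ℝ)*(q-1) + 1) * T k x
        = (2 * g x) * (if (2:ℝ≥0∞) ^ ((k:ℝ) - 1) < g x then (2:ℝ≥0∞) ^ ((k:ℝ)*(q-1)) else 0) := by
      intro k
      simp only [hTdef]
      by_cases h : (2:ℝ≥0∞) ^ ((k:ℝ) - 1) < g x
      · rw [if_pos h, if_pos h, two_rpow_add, ENNReal.rpow_one]
        ring
      · rw [if_neg h, if_neg h, mul_zero, mul_zero]
    have h2 : (∑' k : ℤ, (if (2:ℝ≥0∞) ^ ((k:ℝ) - 1) < g x then (2:ℝ≥0∞) ^ ((k:ℝ)*(q-1)) else 0))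
        = 2 ^ (q-1) * ∑' m : ℤ, (if (2:ℝ≥0∞) ^ ((m:ℝ)) < g x then (2:ℝ≥0∞) ^ ((m:ℝ)*(q-1)) else 0) := by
      rw [← ((Equiv.addRight (1:ℤ)).tsum_eq (fun k : ℤ =>
        (if (2:ℝ≥0∞) ^ ((k:ℝ) - 1) < g x then (2:ℝ≥0∞) ^ ((k:ℝ)*(q-1)) else 0)))]
      rw [← ENNReal.tsum_mul_left]
      congr 1; funext m
      have hcast : ((Equiv.addRight (1:ℤ)) m : ℝ) - 1 = (m:ℝ) := by
        push_cast [Equiv.coe_addRight]; ring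
      have hcast2 : ((Equiv.addRight (1:ℤ)) m : ℝ) * (q-1) = (q-1) + (m:ℝ)*(q-1) := by
        push_cast [Equiv.coe_addRight]; ring
      rw [hcast, hcast2, two_rpow_add]
      by_cases h : (2:ℝ≥0∞) ^ ((m:ℝ)) < g x
      · rw [if_pos h, if_pos h]
      · rw [if_neg h, if_neg h, mul_zero]
    calc (∑' k : ℤ, (2:ℝ≥0∞) ^ ((k:ℝ)*(q-1) + 1) * T k x)
        = (2 * g x) * ∑' k : ℤ, (if (2:ℝ≥0∞) ^ ((k:ℝ) - 1) < g x then (2:ℝ≥0∞) ^ ((k:ℝ)*(q-1)) else 0) := by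
          rw [← ENNReal.tsum_mul_left]; congr 1; funext k; exact h1 k
      _ = (2 * g x) * (2 ^ (q-1) * ∑' m : ℤ, (if (2:ℝ≥0∞) ^ ((m:ℝ)) < g x then (2:ℝ≥0∞) ^ ((m:ℝ)*(q-1)) else 0)) := by
          rw [h2]
      _ ≤ (2 * g x) * (2 ^ (q-1) * (Cg * g x ^ (q-1))) := by
          refine mul_le_mul_right (mul_le_mul_right ?_ _) _
          exact helper_geom hq1 (g x)
      _ = 2 * 2 ^ (q-1) * Cg * g x ^ q := by rw [← self_mul_rpow hq (g x)]; ring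
  calc ∫⁻ x, F x ^ q
      ≤ 2 ^ q * ∑' k : ℤ, ∫⁻ x, (if (2:ℝ≥0∞) ^ (k:ℝ) < F x then (2:ℝ≥0∞) ^ ((k:ℝ)*q) else 0) := step1
    _ ≤ 2 ^ q * ∑' k : ℤ, (2:ℝ≥0∞) ^ ((k:ℝ)*q) * (5 ^ n * (2 ^ ((k:ℝ) - 1))⁻¹ * ∫⁻ x, T k x) :=
        mul_le_mul_right (ENNReal.tsum_le_tsum step2) _
    _ = 2 ^ q * (5 ^ n * ∑' k : ℤ, ∫⁻ x, (2:ℝ≥0∞) ^ ((k:ℝ)*(q-1) + 1) * T k x) := by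
        congr 1
        rw [← ENNReal.tsum_mul_left]
        congr 1; funext k
        rw [lintegral_const_mul _ (hTmeas k)]
        rw [show (2:ℝ≥0∞) ^ ((k:ℝ)*q) * (5 ^ n * (2 ^ ((k:ℝ) - 1))⁻¹ * ∫⁻ x, T k x)
          = (5:ℝ≥0∞) ^ n * ((2 ^ ((k:ℝ)*q) * (2 ^ ((k:ℝ) - 1))⁻¹) * ∫⁻ x, T k x) by ring]
        congr 2
        rw [← ENNReal.rpow_neg, ← two_rpow_add]
        congr 1; ring
    _ = 2 ^ q * (5 ^ n * ∫⁻ x, ∑' k : ℤ, (2:ℝ≥0∞) ^ ((k:ℝ)*(q-1) + 1) * T k x) := by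
        rw [lintegral_tsum fun k => ((hTmeas k).const_mul _).aemeasurable]
    _ ≤ 2 ^ q * (5 ^ n * ∫⁻ x, 2 * 2 ^ (q-1) * Cg * g x ^ q) := by
        exact mul_le_mul_right (mul_le_mul_right (lintegral_mono hptwise) _) _
    _ = 2 ^ q * 5 ^ n * (2 * 2 ^ (q-1) * Cg) * ∫⁻ x, g x ^ q := by
        rw [lintegral_const_mul _ (hg.pow_const q)]
        ring

lemma measurable_balayage (n : ℕ) (μ : Measure (EuclideanSpace ℝ (Fin n) × ℝ)) [SFinite μ] :
    Measurable (balayage n μ) := by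
  have hopen : ∀ x : EuclideanSpace ℝ (Fin n),
      IsOpen {p : EuclideanSpace ℝ (Fin n) × ℝ | dist p.1 x < p.2} := fun x =>
    isOpen_lt (Continuous.dist continuous_fst continuous_const) continuous_snd
  have hrw : balayage n μ = fun x => ∫⁻ p,
      (if dist p.1 x < p.2 then (ENNReal.ofReal (p.2 ^ n))⁻¹ else 0) ∂μ := by
    funext x
    rw [balayage, ← lintegral_indicator (hopen x).measurableSet]
    exact lintegral_congr fun p => by simp [Set.indicator_apply, mem_setOf_eq]
  have hmeasF : Measurable (Function.uncurry (fun (x : EuclideanSpace ℝ (Fin n))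
      (p : EuclideanSpace ℝ (Fin n) × ℝ) =>
      if dist p.1 x < p.2 then (ENNReal.ofReal (p.2 ^ n))⁻¹ else 0)) := by
    show Measurable fun z : EuclideanSpace ℝ (Fin n) × (EuclideanSpace ℝ (Fin n) × ℝ) =>
      if dist z.2.1 z.1 < z.2.2 then (ENNReal.ofReal (z.2.2 ^ n))⁻¹ else 0
    apply Measurable.ite
    · exact (isOpen_lt (Continuous.dist (continuous_fst.comp continuous_snd) continuous_fst)
        (continuous_snd.comp continuous_snd)).measurableSet
    · exact ((ENNReal.continuous_ofReal.comp ((continuous_pow n).comp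
        (continuous_snd.comp continuous_snd))).measurable).inv
    · exact measurable_const
  rw [hrw]
  exact Measurable.lintegral_prod_right hmeasF

lemma hoelder_ball {n : ℕ} {p₀ : ℝ} (h0 : 0 < p₀) (h1 : p₀ < 1)
    (f : EuclideanSpace ℝ (Fin n) → ℝ≥0∞) (hf : Measurable f)
    (hae : ∀ᵐ x ∂(volume : Measure (EuclideanSpace ℝ (Fin n))), 0 < f x ∧ f x < ⊤)
    (c : EuclideanSpace ℝ (Fin n)) {r : ℝ} (hr : 0 < r) :
    ((volume (ball c r))⁻¹ * ∫⁻ x in ball c r, (f x)⁻¹)⁻¹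
      ≤ ((volume (ball c r))⁻¹ * ∫⁻ x in ball c r, f x ^ p₀) ^ ((1:ℝ)/p₀) := by
  set V := volume (ball c r) with hVdef
  have hV0 : V ≠ 0 := (measure_ball_pos _ _ hr).ne'
  have hVt : V ≠ ⊤ := measure_ball_lt_top.ne
  set X := ∫⁻ x in ball c r, f x ^ p₀ with hXdef
  set Y := ∫⁻ x in ball c r, (f x)⁻¹ with hYdef
  have hp0' : p₀ ≠ 0 := h0.ne'
  have hp1' : (1:ℝ)+p₀ ≠ 0 := by linarith
  have hconj : (1+p₀).HolderConjugate ((1+p₀)/p₀) := by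
    refine Real.holderConjugate_iff.mpr ⟨?_, ?_⟩
    · linarith
    · rw [inv_div]
      field_simp
  have key : V ≤ X ^ ((1:ℝ)/(1+p₀)) * Y ^ (p₀/(1+p₀)) := by
    set s : ℝ := p₀/(1+p₀) with hsdef
    have hs0 : 0 < s := by positivity
    have huv : ∀ᵐ x ∂(volume.restrict (ball c r)),
        (1:ℝ≥0∞) = (f x ^ s) * ((f x)⁻¹ ^ s) := by
      filter_upwards [ae_restrict_of_ae hae] with x hx
      rw [← ENNReal.mul_rpow_of_ne_top hx.2.ne (ENNReal.inv_ne_top.2 hx.1.ne'),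
        ENNReal.mul_inv_cancel hx.1.ne' hx.2.ne, ENNReal.one_rpow]
    have hHold := ENNReal.lintegral_mul_le_Lp_mul_Lq (volume.restrict (ball c r)) hconj
      ((hf.pow_const s).aemeasurable) ((hf.inv.pow_const s).aemeasurable)
    calc V = ∫⁻ x in ball c r, 1 := (setLIntegral_one _).symm
      _ = ∫⁻ x in ball c r, (f x ^ s) * ((f x)⁻¹ ^ s) := lintegral_congr_ae huv
      _ ≤ (∫⁻ x in ball c r, (f x ^ s) ^ (1+p₀)) ^ ((1:ℝ)/(1+p₀)) *
          (∫⁻ x in ball c r, ((f x)⁻¹ ^ s) ^ ((1+p₀)/p₀)) ^ ((1:ℝ)/((1+p₀)/p₀)) := hHold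
      _ = X ^ ((1:ℝ)/(1+p₀)) * Y ^ (p₀/(1+p₀)) := by
          congr 1
          · congr 1
            apply lintegral_congr
            intro x
            rw [← ENNReal.rpow_mul]
            congr 1
            rw [hsdef]
            field_simp
          · rw [one_div_div]
            congr 1
            apply lintegral_congr
            intro x
            rw [← ENNReal.rpow_mul]
            rw [show s * ((1+p₀)/p₀) = 1 by rw [hsdef]; field_simp]
            exact ENNReal.rpow_one _
  set e : ℝ := (1+p₀)/p₀ with hedef
  have he0 : (0:ℝ) < e := by positivity
  have hXY : V ^ e ≤ X ^ ((1:ℝ)/p₀) * Y := by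
    calc V ^ e ≤ (X ^ ((1:ℝ)/(1+p₀)) * Y ^ (p₀/(1+p₀))) ^ e :=
        ENNReal.rpow_le_rpow key he0.le
      _ = X ^ ((1:ℝ)/p₀) * Y := by
          rw [ENNReal.mul_rpow_of_nonneg _ _ he0.le, ← ENNReal.rpow_mul, ← ENNReal.rpow_mul]
          rw [show (1:ℝ)/(1+p₀) * e = 1/p₀ by rw [hedef]; field_simp; try ring,
            show p₀/(1+p₀) * e = 1 by rw [hedef]; field_simp; try ring]
          rw [ENNReal.rpow_one]
  have hVe0 : V ^ e ≠ 0 := (ENNReal.rpow_pos (lt_of_le_of_ne zero_le (Ne.symm hV0)) hVt).ne'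
  have hVet : V ^ e ≠ ⊤ := ENNReal.rpow_ne_top_of_nonneg he0.le hVt
  set A := (V⁻¹ * X) ^ ((1:ℝ)/p₀) with hAdef
  set Z := V⁻¹ * Y with hZdef
  have hone : 1 ≤ A * Z := by
    have h2 : (V ^ e)⁻¹ * V ^ e ≤ (V ^ e)⁻¹ * (X ^ ((1:ℝ)/p₀) * Y) := mul_le_mul_right hXY _
    rw [ENNReal.inv_mul_cancel hVe0 hVet] at h2
    refine le_trans h2 (le_of_eq ?_)
    have hA : A = (V ^ ((1:ℝ)/p₀))⁻¹ * X ^ ((1:ℝ)/p₀) := by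
      rw [hAdef, ENNReal.mul_rpow_of_nonneg _ _ (by positivity : (0:ℝ) ≤ 1/p₀),
        ENNReal.inv_rpow]
    have hVe : (V ^ e)⁻¹ = (V ^ ((1:ℝ)/p₀))⁻¹ * V⁻¹ := by
      rw [show e = 1/p₀ + 1 by rw [hedef]; field_simp; try ring,
        ENNReal.rpow_add _ _ hV0 hVt, ENNReal.rpow_one,
        ENNReal.mul_inv (Or.inr hVt) (Or.inl (ENNReal.rpow_ne_top_of_nonneg (by positivity) hVt))]
    rw [hVe, hA, hZdef]
    ring
  by_cases hAt : A = ⊤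
  · rw [hAt]; exact le_top
  have hA0 : A ≠ 0 := by
    intro h0'
    rw [h0', zero_mul] at hone
    exact absurd hone (by simp)
  have hinv : A⁻¹ ≤ Z := by
    calc A⁻¹ = A⁻¹ * 1 := (mul_one _).symm
      _ ≤ A⁻¹ * (A * Z) := mul_le_mul_right hone _
      _ = (A⁻¹ * A) * Z := (mul_assoc _ _ _).symm
      _ = Z := by rw [ENNReal.inv_mul_cancel hA0 hAt, one_mul]
  have := ENNReal.inv_le_inv.2 hinv
  rwa [inv_inv] at this


/-- factorization of bounded measures by Carleson measures: pointwise
𝒩(E(μ)⁻¹)(x) ≤ M(𝒜̄(μ)^{p₀})(x)^{1/p₀}, and consequently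
‖𝒩(E(μ)⁻¹)‖_{L¹} ≤ C(n,p₀) ‖𝒜̄(μ)‖_{L¹}. -/
theorem measure_factorization_nt_bound (n : ℕ) (p₀ : ℝ) (h0 : 0 < p₀) (h1 : p₀ < 1) :
    ∃ C : ENNReal, 0 < C ∧ C ≠ ⊤ ∧
      ∀ (μ : Measure (EuclideanSpace ℝ (Fin n) × ℝ)), IsFiniteMeasure μ →
        (∀ᵐ x ∂(volume : Measure (EuclideanSpace ℝ (Fin n))),
          0 < balayage n μ x ∧ balayage n μ x < ⊤) →
        (∀ x : EuclideanSpace ℝ (Fin n),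
          (⨆ p ∈ {p : EuclideanSpace ℝ (Fin n) × ℝ | dist p.1 x < p.2},
              (balExt n μ p.1 p.2)⁻¹) ≤
            hlMax n (fun z => balayage n μ z ^ p₀) x ^ (1/p₀)) ∧
        (∫⁻ x, ⨆ p ∈ {p : EuclideanSpace ℝ (Fin n) × ℝ | dist p.1 x < p.2},
            (balExt n μ p.1 p.2)⁻¹) ≤
          C * ∫⁻ x, balayage n μ x := by

  have hq : (1:ℝ) < 1/p₀ := (one_lt_div h0).2 h1
  obtain ⟨C, hC0, hCt, hCstrong⟩ := strong_type n hq
  refine ⟨C, hC0, hCt, ?_⟩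
  intro μ hfin hae
  haveI := hfin
  have hbal : Measurable (balayage n μ) := measurable_balayage n μ
  have hg : Measurable (fun z => balayage n μ z ^ p₀) := hbal.pow_const _
  have hpoint : ∀ x : EuclideanSpace ℝ (Fin n),
      (⨆ p ∈ {p : EuclideanSpace ℝ (Fin n) × ℝ | dist p.1 x < p.2},
        (balExt n μ p.1 p.2)⁻¹) ≤
      hlMax n (fun z => balayage n μ z ^ p₀) x ^ (1/p₀) := by
    intro x
    refine iSup₂_le ?_
    rintro ⟨y, t⟩ hp
    simp only [mem_setOf_eq] at hp
    have ht : 0 < t := lt_of_le_of_lt dist_nonneg hp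
    have hx : x ∈ ball y t := by rw [mem_ball, dist_comm]; exact hp
    calc (balExt n μ y t)⁻¹
        ≤ ((volume (ball y t))⁻¹ * ∫⁻ z in ball y t, balayage n μ z ^ p₀) ^ ((1:ℝ)/p₀) :=
          hoelder_ball h0 h1 _ hbal hae y ht
      _ ≤ hlMax n (fun z => balayage n μ z ^ p₀) x ^ (1/p₀) :=
          ENNReal.rpow_le_rpow (le_hlMax n _ ht hx) (by positivity)
  refine ⟨hpoint, ?_⟩
  calc (∫⁻ x, ⨆ p ∈ {p : EuclideanSpace ℝ (Fin n) × ℝ | dist p.1 x < p.2},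
        (balExt n μ p.1 p.2)⁻¹)
      ≤ ∫⁻ x, hlMax n (fun z => balayage n μ z ^ p₀) x ^ (1/p₀) := lintegral_mono hpoint
    _ ≤ C * ∫⁻ x, (balayage n μ x ^ p₀) ^ ((1:ℝ)/p₀) := hCstrong _ hg
    _ = C * ∫⁻ x, balayage n μ x := by
        congr 1
        apply lintegral_congr
        intro x
        rw [← ENNReal.rpow_mul, mul_one_div_cancel h0.ne', ENNReal.rpow_one]
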